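/- Let G = AGL(d,2) with d ≥ 3, acting on the points of AG(d,2). For any three distinct points 0, 1, c with c' the fourth point of the plane they span, the stabilizer G(0,1,c) acts transitively on AG(d,2) \ {0, 1, c, c'}. -/

import Mathlib

section aux

variable {d : ℕ}

abbrev V (d : ℕ) := Fin d → ZMod 2

lemma add_self_eq_zero' (u : V d) : u + u = 0 := by
  funext i; exact CharTwo.add_self_eq_zero _

lemma key_eq {u v : V d} (huv : u + v = 0) : u = v := by
  have : u + (v + v) = v := by rw [← add_assoc, huv, zero_add]
  rwa [add_self_eq_zero' v, add_zero] at this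

lemma zmod2_cases (a : ZMod 2) : a = 0 ∨ a = 1 := by fin_cases a <;> [exact Or.inl rfl; exact Or.inr rfl]

lemma triple_indep {b c x : V d} (hb : b ≠ 0) (hc : c ≠ 0) (hbc : b ≠ c)
    (hx0 : x ≠ 0) (hxb : x ≠ b) (hxc : x ≠ c) (hxbc : x ≠ b + c) :
    LinearIndependent (ZMod 2) ![b, c, x] := by
  rw [Fintype.linearIndependent_iff]
  intro g hg
  have h0 := zmod2_cases (g 0)
  have h1 := zmod2_cases (g 1)
  have h2 := zmod2_cases (g 2)
  have hsum : g 0 • b + g 1 • c + g 2 • x = 0 := by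
    simpa [Fin.sum_univ_three] using hg
  rcases h0 with h0 | h0 <;> rcases h1 with h1 | h1 <;> rcases h2 with h2 | h2 <;>
    simp only [h0, h1, h2, one_smul, zero_smul, zero_add, add_zero] at hsum
  · intro i; fin_cases i <;> simp [h0, h1, h2]
  · exact absurd hsum hx0
  · exact absurd hsum hc
  · exact absurd (key_eq hsum).symm hxc
  · exact absurd hsum hb
  · exact absurd (key_eq hsum).symm hxb
  · exact absurd (key_eq hsum) hbc
  · exact absurd (key_eq hsum).symm hxbc

lemma exists_lin_equiv {v w : Fin 3 → V d}
    (hv : LinearIndependent (ZMod 2) v) (hw : LinearIndependent (ZMod 2) w) :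
    ∃ F : V d ≃ₗ[ZMod 2] V d, ∀ i, F (v i) = w i := by
  set p := Submodule.span (ZMod 2) (Set.range v)
  set q := Submodule.span (ZMod 2) (Set.range w)
  obtain ⟨p', hp⟩ := p.exists_isCompl
  obtain ⟨q', hq⟩ := q.exists_isCompl
  set e : p ≃ₗ[ZMod 2] q := (Module.Basis.span hv).equiv (Module.Basis.span hw) (Equiv.refl _) with he_def
  have hpq : Module.finrank (ZMod 2) p = Module.finrank (ZMod 2) q := e.finrank_eq
  have hdim : Module.finrank (ZMod 2) p' = Module.finrank (ZMod 2) q' := by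
    have h1 := Submodule.finrank_add_eq_of_isCompl hp
    have h2 := Submodule.finrank_add_eq_of_isCompl hq
    omega
  have g : p' ≃ₗ[ZMod 2] q' := LinearEquiv.ofFinrankEq _ _ hdim
  refine ⟨(((Submodule.prodEquivOfIsCompl p p' hp).symm.trans (e.prodCongr g)).trans
    (Submodule.prodEquivOfIsCompl q q' hq)), fun i => ?_⟩
  have hvi : v i ∈ p := Submodule.subset_span ⟨i, rfl⟩
  have h1 : (Submodule.prodEquivOfIsCompl p p' hp).symm (v i) = (((⟨v i, hvi⟩ : p), 0) : p × p') :=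
    Submodule.prodEquivOfIsCompl_symm_apply_left p p' hp (⟨v i, hvi⟩ : p)
  have he : e (⟨v i, hvi⟩ : p) = (⟨w i, Submodule.subset_span ⟨i, rfl⟩⟩ : q) := by
    have hb : (⟨v i, hvi⟩ : p) = Module.Basis.span hv i := by
      ext; simp [Module.Basis.span_apply]
    rw [hb, he_def, Module.Basis.equiv_apply]
    exact Module.Basis.span_apply hw i
  simp [LinearEquiv.trans_apply, h1, LinearEquiv.prodCongr_apply, he,
    Submodule.coe_prodEquivOfIsCompl']

end aux

lemma tcancel (a u : V d) : (a + u) + a = u := by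
  rw [add_comm a u, add_assoc, add_self_eq_zero', add_zero]

/-- `g` is an affine permutation of `GF(2)^d`. -/
def IsAffinePerm {d : ℕ} (g : Equiv.Perm (Fin d → ZMod 2)) : Prop :=
  ∃ (A : (Fin d → ZMod 2) ≃ₗ[ZMod 2] (Fin d → ZMod 2)) (t : Fin d → ZMod 2),
    ∀ x, g x = A x + t

/-- for `AGL(d,2)` with `d ≥ 3`, the stabilizer of three distinct points
`a, b, c` acts transitively on the complement of `{a, b, c, a+b+c}` in `AG(d,2)`. -/
theorem stmt15 (d : ℕ) (hd : 3 ≤ d) :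
    ∀ a b c : Fin d → ZMod 2, a ≠ b → a ≠ c → b ≠ c →
      ∀ x y : Fin d → ZMod 2,
        x ∉ ({a, b, c, a + b + c} : Set (Fin d → ZMod 2)) →
        y ∉ ({a, b, c, a + b + c} : Set (Fin d → ZMod 2)) →
        ∃ g : Equiv.Perm (Fin d → ZMod 2), IsAffinePerm g ∧
          g a = a ∧ g b = b ∧ g c = c ∧ g x = y := by
  intro a b c hab hac hbc x y hx hy
  simp only [Set.mem_insert_iff, Set.mem_singleton_iff, not_or] at hx hy
  obtain ⟨hxa, hxb, hxc, hxs⟩ := hx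
  obtain ⟨hya, hyb, hyc, hys⟩ := hy
  have hsum : (a + b) + (a + c) = a + (a + b + c) := by abel
  have indep : ∀ z : Fin d → ZMod 2, z ≠ a → z ≠ b → z ≠ c → z ≠ a + b + c →
      LinearIndependent (ZMod 2) ![a + b, a + c, a + z] := by
    intro z hza hzb hzc hzs
    refine triple_indep (fun h => hab (key_eq h)) (fun h => hac (key_eq h))
      (fun h => hbc (add_left_cancel h)) (fun h => hza (key_eq h).symm)
      (fun h => hzb (add_left_cancel h)) (fun h => hzc (add_left_cancel h)) ?_
    rw [hsum]
    exact fun h => hzs (add_left_cancel h)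
  obtain ⟨F, hF⟩ := exists_lin_equiv (indep x hxa hxb hxc hxs) (indep y hya hyb hyc hys)
  have hF0 : F (a + b) = a + b := hF 0
  have hF1 : F (a + c) = a + c := hF 1
  have hF2 : F (a + x) = a + y := hF 2
  refine ⟨((Equiv.addRight a).trans F.toEquiv).trans (Equiv.addRight a), ⟨F, F a + a, ?_⟩,
    ?_, ?_, ?_, ?_⟩
  · intro z
    show F (z + a) + a = F z + (F a + a)
    rw [map_add]; abel
  · show F (a + a) + a = a
    rw [add_self_eq_zero', map_zero, zero_add]
  · show F (b + a) + a = b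
    rw [add_comm b a, hF0, tcancel]
  · show F (c + a) + a = c
    rw [add_comm c a, hF1, tcancel]
  · show F (x + a) + a = y
    rw [add_comm x a, hF2, tcancel]
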